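/- Let n be finite and let G be an entrywise nonnegative n × n real matrix such that Σ_{m=0}^∞ G^m converges (so (I − G)^{-1} exists and is entrywise nonnegative). Let f, β, ξ ∈ ℝⁿ with f ≥ 0 and ξ ≥ 0 entrywise, and suppose f ≤ β + Gf + ξ·‖f‖_∞ entrywise, where ‖·‖_∞ is the maximum-absolute-value norm. If ‖(I − G)^{-1}ξ‖_∞ < 1, then ‖f‖_∞ ≤ ‖(I − G)^{-1}β‖_∞ / (1 − ‖(I − G)^{-1}ξ‖_∞), and consequently f ≤ (I − G)^{-1}β + (I − G)^{-1}ξ · ‖(I − G)^{-1}β‖_∞ / (1 − ‖(I − G)^{-1}ξ‖_∞) entrywise. -/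

import Mathlib

set_option autoImplicit false

/-- **The fixed-point upper bound.** If `G` is an entrywise nonnegative `n × n`
real matrix whose Neumann series `Σ_m G^m` converges entrywise (so `(I - G)⁻¹`
exists and is entrywise nonnegative), `f, β, ξ ∈ ℝⁿ` with `f ≥ 0`, `ξ ≥ 0`
entrywise, `f ≤ β + Gf + ξ·‖f‖_∞` entrywise, and `‖(I - G)⁻¹ξ‖_∞ < 1`, then
`‖f‖_∞ ≤ ‖(I - G)⁻¹β‖_∞ / (1 - ‖(I - G)⁻¹ξ‖_∞)` and consequently
`f ≤ (I - G)⁻¹β + (I - G)⁻¹ξ · ‖(I - G)⁻¹β‖_∞ / (1 - ‖(I - G)⁻¹ξ‖_∞)`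
entrywise.  (For `u : n → ℝ` with `n` finite, `‖u‖ = max_i |u i|`.) -/
theorem neumann_fixed_point_upper_bound
    {n : Type*} [Fintype n] [DecidableEq n]
    (G : Matrix n n ℝ)
    (hG : ∀ i j, 0 ≤ G i j)
    (hNeumann : ∀ i j, HasSum (fun m : ℕ => (G ^ m) i j) ((1 - G)⁻¹ i j))
    (hunit : IsUnit (1 - G))
    (hinvpos : ∀ i j, 0 ≤ (1 - G)⁻¹ i j)
    (f β ξ : n → ℝ)
    (hf : ∀ i, 0 ≤ f i) (hξ : ∀ i, 0 ≤ ξ i)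
    (hineq : ∀ i, f i ≤ β i + G.mulVec f i + ξ i * ‖f‖)
    (hcond : ‖(1 - G)⁻¹.mulVec ξ‖ < 1) :
    ‖f‖ ≤ ‖(1 - G)⁻¹.mulVec β‖ / (1 - ‖(1 - G)⁻¹.mulVec ξ‖)
    ∧ ∀ i, f i ≤ (1 - G)⁻¹.mulVec β i
        + (1 - G)⁻¹.mulVec ξ i
          * (‖(1 - G)⁻¹.mulVec β‖ / (1 - ‖(1 - G)⁻¹.mulVec ξ‖)) := by

  set A := (1 - G)⁻¹ with hA
  set B := A.mulVec β with hB
  set X := A.mulVec ξ with hX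
  have hdet : IsUnit (1 - G).det := (Matrix.isUnit_iff_isUnit_det _).mp hunit
  have hAmul : A * (1 - G) = 1 := Matrix.nonsing_inv_mul _ hdet
  -- entrywise bound f i ≤ B i + X i * ‖f‖
  have key : ∀ i, f i ≤ B i + X i * ‖f‖ := by
    intro i
    have h1 : ∀ j, (1 - G).mulVec f j ≤ β j + ξ j * ‖f‖ := by
      intro j
      have := hineq j
      simp [Matrix.sub_mulVec, Matrix.one_mulVec, sub_le_iff_le_add]
      linarith
    have h2 : A.mulVec ((1 - G).mulVec f) i ≤ A.mulVec (fun j => β j + ξ j * ‖f‖) i := by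
      unfold Matrix.mulVec dotProduct
      apply Finset.sum_le_sum
      intro j _
      exact mul_le_mul_of_nonneg_left (h1 j) (hinvpos i j)
    have h3 : A.mulVec ((1 - G).mulVec f) = f := by
      rw [Matrix.mulVec_mulVec, hAmul, Matrix.one_mulVec]
    have h4 : A.mulVec (fun j => β j + ξ j * ‖f‖) i = B i + X i * ‖f‖ := by
      simp only [hB, hX, Matrix.mulVec, dotProduct, mul_add, Finset.sum_add_distrib]
      congr 1
      rw [Finset.sum_mul]
      exact Finset.sum_congr rfl (fun j _ => by ring)
    rw [h4, h3] at h2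
    exact h2
  have hfabs : ∀ i, |f i| = f i := fun i => abs_of_nonneg (hf i)
  have hBle : ∀ i, B i ≤ ‖B‖ := fun i =>
    le_trans (le_abs_self _) (by simpa [Real.norm_eq_abs] using norm_le_pi_norm B i)
  have hXle : ∀ i, X i ≤ ‖X‖ := fun i =>
    le_trans (le_abs_self _) (by simpa [Real.norm_eq_abs] using norm_le_pi_norm X i)
  have hXnn : ∀ i, 0 ≤ X i := by
    intro i
    unfold X A
    unfold Matrix.mulVec dotProduct
    exact Finset.sum_nonneg fun j _ => mul_nonneg (hinvpos i j) (hξ j)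
  have hfn : 0 ≤ ‖f‖ := norm_nonneg f
  have hBn : 0 ≤ ‖B‖ := norm_nonneg B
  have hXn : 0 ≤ ‖X‖ := norm_nonneg X
  have hmain : ‖f‖ ≤ ‖B‖ + ‖X‖ * ‖f‖ := by
    apply pi_norm_le_iff_of_nonneg (by positivity) |>.mpr
    intro i
    rw [Real.norm_eq_abs, hfabs i]
    calc f i ≤ B i + X i * ‖f‖ := key i
      _ ≤ ‖B‖ + ‖X‖ * ‖f‖ := by
          have := mul_le_mul_of_nonneg_right (hXle i) hfn
          linarith [hBle i]
  have hden : 0 < 1 - ‖X‖ := by linarith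
  have hnorm : ‖f‖ ≤ ‖B‖ / (1 - ‖X‖) := by
    rw [le_div_iff₀ hden]; nlinarith
  refine ⟨hnorm, fun i => ?_⟩
  calc f i ≤ B i + X i * ‖f‖ := key i
    _ ≤ B i + X i * (‖B‖ / (1 - ‖X‖)) :=
        add_le_add_right (mul_le_mul_of_nonneg_left hnorm (hXnn i)) _
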